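/- Let s, t ≥ 2 and z ≥ 1 be natural numbers with 2z ≤ t·(s−2) + 1, and set θ' = t·(2s−1). Define P_CA = {i + t·j : 0 ≤ i ≤ t−1, 0 ≤ j ≤ s−1}, P_CB = {t·q + θ'·l : 0 ≤ q ≤ s−1, 0 ≤ l ≤ t−1}, P_SA = {t·s + u : 0 ≤ u ≤ z−1}, and P_SB = {t·s + v : 0 ≤ v ≤ z−1}. Then the sumset (P_CA ∪ P_SA) + (P_CB ∪ P_SB) has cardinality t·θ' + z. -/
import Mathlib


open Pointwise

/-- PolyDot-CMPC worker count in the region 2z ≤ t·(s−2)+1: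
|(P_CA ∪ P_SA) + (P_CB ∪ P_SB)| = t·θ' + z = ψ₅, with θ' = t·(2s−1). -/
theorem polydot_workers_psi5 (s t z : ℕ) (hs : 2 ≤ s) (ht : 2 ≤ t)
    (hz : 1 ≤ z) (hzb : 2 * z ≤ t * (s - 2) + 1) :
    (({n : ℕ | ∃ i j, i < t ∧ j < s ∧ n = i + t * j} ∪
      {n : ℕ | ∃ u, u < z ∧ n = t * s + u}) +
     ({n : ℕ | ∃ q l, q < s ∧ l < t ∧ n = t * q + (t * (2 * s - 1)) * l} ∪
      {n : ℕ | ∃ v, v < z ∧ n = t * s + v})).ncard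
      = t * (t * (2 * s - 1)) + z := by
  set θ := t * (2 * s - 1) with hθ
  have hθeq : θ + t = 2 * (t * s) := by
    have h2s : 2 * s - 1 + 1 = 2 * s := by omega
    calc θ + t = t * (2 * s - 1 + 1) := by rw [hθ]; ring
    _ = t * (2 * s) := by rw [h2s]
    _ = 2 * (t * s) := by ring
  have hθpos : 0 < θ := by
    rw [hθ]; exact Nat.mul_pos (by omega) (by omega)
  have hP : t * (s - 2) + 2 * t = t * s := by
    have h2 : s - 2 + 2 = s := by omega
    calc t * (s - 2) + 2 * t = t * (s - 2 + 2) := by ring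
    _ = t * s := by rw [h2]
  have hsm1 : t * (s - 1) + t = t * s := by
    have h1 : s - 1 + 1 = s := by omega
    calc t * (s - 1) + t = t * (s - 1 + 1) := by ring
    _ = t * s := by rw [h1]
  have hθ2 : θ * 2 ≤ θ * t := Nat.mul_le_mul_left θ ht
  have hA : ({n : ℕ | ∃ i j, i < t ∧ j < s ∧ n = i + t * j} ∪
      {n : ℕ | ∃ u, u < z ∧ n = t * s + u}) = Set.Iio (t * s + z) := by
    ext n
    simp only [Set.mem_union, Set.mem_setOf_eq, Set.mem_Iio]
    constructor
    · rintro (⟨i, j, hi, hj, rfl⟩ | ⟨u, hu, rfl⟩)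
      · have hj' : t * j + t ≤ t * s := by
          have : j + 1 ≤ s := hj
          calc t * j + t = t * (j + 1) := by ring
          _ ≤ t * s := Nat.mul_le_mul_left t this
        omega
      · omega
    · intro hn
      by_cases h : n < t * s
      · left
        refine ⟨n % t, n / t, Nat.mod_lt _ (by omega), ?_, ?_⟩
        · rw [Nat.div_lt_iff_lt_mul (by omega)]
          have := Nat.mul_comm s t
          omega
        · have := Nat.mod_add_div n t
          omega
      · right; exact ⟨n - t * s, by omega, by omega⟩
  have hMain : (({n : ℕ | ∃ i j, i < t ∧ j < s ∧ n = i + t * j} ∪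
      {n : ℕ | ∃ u, u < z ∧ n = t * s + u}) +
     ({n : ℕ | ∃ q l, q < s ∧ l < t ∧ n = t * q + θ * l} ∪
      {n : ℕ | ∃ v, v < z ∧ n = t * s + v})) = Set.Iio (θ * t + z) := by
    rw [hA]
    ext n
    simp only [Set.mem_add, Set.mem_union, Set.mem_setOf_eq, Set.mem_Iio]
    constructor
    · rintro ⟨a, ha, b, hb, rfl⟩
      rcases hb with ⟨q, l, hq, hl, rfl⟩ | ⟨v, hv, rfl⟩
      · have hq' : t * q + t ≤ t * s := by
          have : q + 1 ≤ s := hq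
          calc t * q + t = t * (q + 1) := by ring
          _ ≤ t * s := Nat.mul_le_mul_left t this
        have hl' : θ * l + θ ≤ θ * t := by
          have : l + 1 ≤ t := hl
          calc θ * l + θ = θ * (l + 1) := by ring
          _ ≤ θ * t := Nat.mul_le_mul_left θ this
        omega
      · omega
    · intro hn
      set l := min (n / θ) (t - 1) with hldef
      have hl : l < t := by
        have : l ≤ t - 1 := min_le_right _ _
        omega
      have hr1 : θ * l ≤ n := by
        have h1 : l ≤ n / θ := min_le_left _ _
        calc θ * l ≤ θ * (n / θ) := Nat.mul_le_mul_left θ h1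
        _ ≤ n := Nat.mul_div_le n θ
      set r := n - θ * l with hrdef
      have hrub : r < θ + z := by
        rcases le_or_gt (n / θ) (t - 1) with hc | hc
        · have hle : l = n / θ := min_eq_left hc
          rw [hle] at hrdef
          have := Nat.mod_add_div n θ
          have hmod : n % θ < θ := Nat.mod_lt _ hθpos
          omega
        · have hle : l = t - 1 := min_eq_right (le_of_lt hc)
          have ht1 : θ * (t - 1) + θ = θ * t := by
            have h1 : t - 1 + 1 = t := by omega
            calc θ * (t - 1) + θ = θ * (t - 1 + 1) := by ring
            _ = θ * t := by rw [h1]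
          rw [hle] at hrdef
          omega
      by_cases hcase : r < t * s + z
      · exact ⟨r, hcase, θ * l, Or.inl ⟨0, l, by omega, hl, by ring⟩, by omega⟩
      · refine ⟨r - t * (s - 1), by omega, t * (s - 1) + θ * l,
          Or.inl ⟨s - 1, l, by omega, hl, rfl⟩, by omega⟩
  rw [hMain, ← Finset.coe_range, Set.ncard_coe_finset, Finset.card_range]
  ring
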